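/- Let R be a ring and (𝒯, ℱ) a torsion pair in R-Mod. If S is torsion, almost torsionfree and B is torsionfree, almost torsion for (𝒯, ℱ), then Ext¹_R(S, B) = 0. -/

import Mathlib

universe u v
variable {R : Type u} [Ring R]

/-- A torsion pair in `R`-Mod: `Hom(𝒯, ℱ) = 0` and both classes are maximal with
this property. -/
def IsTorsionPair (R : Type u) [Ring R] (𝒯 ℱ : Set (ModuleCat.{v} R)) : Prop :=
  (∀ T ∈ 𝒯, ∀ F ∈ ℱ, ∀ f : ↑T →ₗ[R] ↑F, f = 0) ∧
  (∀ M : ModuleCat.{v} R, (∀ F ∈ ℱ, ∀ f : ↑M →ₗ[R] ↑F, f = 0) → M ∈ 𝒯) ∧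
  (∀ M : ModuleCat.{v} R, (∀ T ∈ 𝒯, ∀ f : ↑T →ₗ[R] ↑M, f = 0) → M ∈ ℱ)

/-- Every module has a torsion submodule, lying in `𝒯`, with quotient in `ℱ`. -/
def HasTorsionRadical (R : Type u) [Ring R] (𝒯 ℱ : Set (ModuleCat.{v} R)) : Prop :=
  ∀ M : ModuleCat.{v} R, ∃ tM : Submodule R ↑M,
    ModuleCat.of R tM ∈ 𝒯 ∧ ModuleCat.of R (↑M ⧸ tM) ∈ ℱ


/-- `B` is torsionfree, almost torsion for `(𝒯, ℱ)`: it is a nonzero torsionfree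
module, every proper quotient is torsion, and for every short exact sequence
`0 → B → F → M → 0` with `F ∈ ℱ` also `M ∈ ℱ`. -/
def IsTFAlmostTorsion (𝒯 ℱ : Set (ModuleCat.{v} R)) (B : ModuleCat.{v} R) : Prop :=
  Nontrivial ↑B ∧ B ∈ ℱ ∧
  (∀ N : Submodule R ↑B, N ≠ ⊥ → ModuleCat.of R (↑B ⧸ N) ∈ 𝒯) ∧
  (∀ F ∈ ℱ, ∀ i : ↑B →ₗ[R] ↑F, Function.Injective i →
    ModuleCat.of R (↑F ⧸ LinearMap.range i) ∈ ℱ)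


/-- `S` is torsion, almost torsionfree for `(𝒯, ℱ)`: it is a nonzero torsion module,
every proper submodule is torsionfree, and for every short exact sequence
`0 → K → T → S → 0` with `T ∈ 𝒯` also `K ∈ 𝒯`. -/
def IsTAlmostTorsionFree (𝒯 ℱ : Set (ModuleCat.{v} R)) (S : ModuleCat.{v} R) : Prop :=
  Nontrivial ↑S ∧ S ∈ 𝒯 ∧
  (∀ N : Submodule R ↑S, N ≠ ⊤ → ModuleCat.of R N ∈ ℱ) ∧
  (∀ T ∈ 𝒯, ∀ p : ↑T →ₗ[R] ↑S, Function.Surjective p →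
    ModuleCat.of R (LinearMap.ker p) ∈ 𝒯)

section Aux

variable (𝒯 ℱ : Set (ModuleCat.{v} R))

/-- `X` is torsion: every map to a module in `ℱ` vanishes. -/
def IsTorX (X : Type v) [AddCommGroup X] [Module R X] : Prop :=
  ∀ F ∈ ℱ, ∀ f : X →ₗ[R] ↑F, f = 0

/-- `X` is torsionfree: every map from a module in `𝒯` vanishes. -/
def IsFrX (X : Type v) [AddCommGroup X] [Module R X] : Prop :=
  ∀ T ∈ 𝒯, ∀ f : ↑T →ₗ[R] X, f = 0

variable {𝒯 ℱ}

lemma isTorX_of_surj {X Y : Type v} [AddCommGroup X] [Module R X] [AddCommGroup Y] [Module R Y]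
    (hX : IsTorX ℱ X) (g : X →ₗ[R] Y) (hg : Function.Surjective g) : IsTorX ℱ Y := by
  intro F hF f
  have h0 : f ∘ₗ g = 0 := hX F hF _
  ext y
  obtain ⟨x, rfl⟩ := hg y
  exact congrFun (congrArg (fun h => h.toFun) h0) x

lemma isFrX_of_inj {X Y : Type v} [AddCommGroup X] [Module R X] [AddCommGroup Y] [Module R Y]
    (hY : IsFrX 𝒯 Y) (g : X →ₗ[R] Y) (hg : Function.Injective g) : IsFrX 𝒯 X := by
  intro T hT f
  have h0 : g ∘ₗ f = 0 := hY T hT _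
  ext x
  apply hg
  simpa using congrFun (congrArg (fun h => h.toFun) h0) x

lemma subsingleton_of_tor_fr (htp : IsTorsionPair R 𝒯 ℱ)
    {X : Type v} [AddCommGroup X] [Module R X]
    (h1 : IsTorX ℱ X) (h2 : IsFrX 𝒯 X) : Subsingleton X := by
  have hXF : ModuleCat.of R X ∈ ℱ := htp.2.2 (ModuleCat.of R X) (fun T hT f => h2 T hT f)
  have hid : (LinearMap.id : X →ₗ[R] X) = 0 := h1 (ModuleCat.of R X) hXF LinearMap.id
  refine ⟨fun a b => ?_⟩
  have ha : a = 0 := congrFun (congrArg (fun h => h.toFun) hid) a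
  have hb : b = 0 := congrFun (congrArg (fun h => h.toFun) hid) b
  rw [ha, hb]

end Aux

/-- If `S` is torsion, almost torsionfree and `B` is torsionfree, almost torsion
for the same torsion pair, then `Ext¹(S, B) = 0`: every short exact sequence
`0 → B → E → S → 0` splits. -/
theorem stmt_7 (𝒯 ℱ : Set (ModuleCat.{v} R)) (htp : IsTorsionPair R 𝒯 ℱ)
    (S B : ModuleCat.{v} R)
    (hS : IsTAlmostTorsionFree 𝒯 ℱ S) (hB : IsTFAlmostTorsion 𝒯 ℱ B) :
    ∀ (E : ModuleCat.{v} R) (i : ↑B →ₗ[R] ↑E) (p : ↑E →ₗ[R] ↑S),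
      Function.Injective i → Function.Surjective p →
      LinearMap.range i = LinearMap.ker p →
      ∃ s : ↑S →ₗ[R] ↑E, p ∘ₗ s = LinearMap.id := by
  intro E i p hi hp hrange
  obtain ⟨hSnt, hSmem, hSsub, hSker⟩ := hS
  obtain ⟨hBnt, hBmem, hBquot, hBext⟩ := hB
  -- the torsion submodule of `E`
  set tE : Submodule R ↑E := ⨆ N : {N : Submodule R ↑E // IsTorX ℱ ↥N}, N.1 with htEdef
  have hle : ∀ (N : Submodule R ↑E), IsTorX ℱ ↥N → N ≤ tE := fun N hN =>
    le_iSup (fun N : {N : Submodule R ↑E // IsTorX ℱ ↥N} => N.1) ⟨N, hN⟩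
  -- `tE` is torsion
  have htor : IsTorX ℱ ↥tE := by
    intro F hF f
    ext x
    obtain ⟨x, hx⟩ := x
    show f ⟨x, hx⟩ = 0
    refine Submodule.iSup_induction' (motive := fun y hy => f ⟨y, hy⟩ = 0) _ ?_ ?_ ?_ hx
    · rintro ⟨N, hN⟩ y hy
      have h0 : f ∘ₗ Submodule.inclusion (hle N hN) = 0 := hN F hF _
      have := congrFun (congrArg (fun h => h.toFun) h0) ⟨y, hy⟩
      exact this
    · show f 0 = 0
      exact map_zero f
    · intro y z hy hz h1 h2
      show f (⟨y, hy⟩ + ⟨z, hz⟩) = 0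
      rw [map_add, h1, h2, add_zero]
  -- an injection of any submodule of `ker p` into `B`
  have inj_into_B : ∀ (N : Submodule R ↑E), N ≤ LinearMap.ker p → IsFrX 𝒯 ↥N := by
    intro N hN
    have hle' : LinearMap.range (N.subtype) ≤ LinearMap.range i := by
      rw [hrange]
      rintro x ⟨y, rfl⟩
      exact hN y.2
    let u : ↥N →ₗ[R] ↥(LinearMap.range i) :=
      LinearMap.codRestrict _ N.subtype (fun x => hle' ⟨x, rfl⟩)
    have hu : Function.Injective u := by
      intro a b hab
      apply Subtype.ext
      exact congrArg (fun z : ↥(LinearMap.range i) => (z : ↑E)) hab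
    have hBfr : IsFrX 𝒯 ↑B := fun T hT f => htp.1 T hT B hBmem f
    have hrfr : IsFrX 𝒯 ↥(LinearMap.range i) := by
      refine isFrX_of_inj hBfr ((LinearEquiv.ofInjective i hi).symm : _ →ₗ[R] ↑B) ?_
      exact (LinearEquiv.ofInjective i hi).symm.injective
    exact isFrX_of_inj hrfr u hu
  -- the restriction of `p` to `tE`
  set q : ↥tE →ₗ[R] ↑S := p ∘ₗ tE.subtype with hqdef
  by_cases hcase : LinearMap.range q = ⊤
  · -- `p` restricted to `tE` is onto, and its kernel is both torsion and torsionfree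
    have hq : Function.Surjective q := LinearMap.range_eq_top.mp hcase
    have hkermem : ModuleCat.of R ↥(LinearMap.ker q) ∈ 𝒯 :=
      hSker (ModuleCat.of R ↥tE) (htp.2.1 (ModuleCat.of R ↥tE) (fun F hF f => htor F hF f)) q hq
    have hkertor : IsTorX ℱ ↥(LinearMap.ker q) := fun F hF f =>
      htp.1 (ModuleCat.of R ↥(LinearMap.ker q)) hkermem F hF f
    have hkerfr : IsFrX 𝒯 ↥(LinearMap.ker q) := by
      have hsub : LinearMap.ker q ≤ ⊤ := le_top
      -- map `ker q → E` landing in `ker p`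
      have hNle : Submodule.map tE.subtype (LinearMap.ker q) ≤ LinearMap.ker p := by
        rintro x ⟨y, hy, rfl⟩
        exact hy
      have hfrmap : IsFrX 𝒯 ↥(Submodule.map tE.subtype (LinearMap.ker q)) :=
        inj_into_B _ hNle
      refine isFrX_of_inj hfrmap (LinearMap.codRestrict _ (tE.subtype ∘ₗ (LinearMap.ker q).subtype)
        (fun x => ⟨x.1, x.2, rfl⟩)) ?_
      intro a b hab
      apply Subtype.ext
      apply Subtype.ext
      exact congrArg
        (fun z : ↥(Submodule.map tE.subtype (LinearMap.ker q)) => (z : ↑E)) hab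
    have : Subsingleton ↥(LinearMap.ker q) := subsingleton_of_tor_fr htp hkertor hkerfr
    have hqinj : Function.Injective q := by
      rw [← LinearMap.ker_eq_bot]
      exact Submodule.eq_bot_of_subsingleton
    let e := LinearEquiv.ofBijective q ⟨hqinj, hq⟩
    refine ⟨tE.subtype ∘ₗ (e.symm : ↑S →ₗ[R] ↥tE), ?_⟩
    ext x
    show p (tE.subtype (e.symm x)) = x
    have : q (e.symm x) = x := e.apply_symm_apply x
    exact this
  · -- otherwise `range q` is a proper submodule of `S`, hence torsionfree; but it is torsion
    exfalso
    have hrqF : ModuleCat.of R ↥(LinearMap.range q) ∈ ℱ := hSsub _ hcase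
    have hrqfr : IsFrX 𝒯 ↥(LinearMap.range q) := fun T hT f =>
      htp.1 T hT (ModuleCat.of R ↥(LinearMap.range q)) hrqF f
    have hrqtor : IsTorX ℱ ↥(LinearMap.range q) :=
      isTorX_of_surj htor q.rangeRestrict q.surjective_rangeRestrict
    have : Subsingleton ↥(LinearMap.range q) := subsingleton_of_tor_fr htp hrqtor hrqfr
    have hrq0 : LinearMap.range q = ⊥ := Submodule.eq_bot_of_subsingleton
    -- hence `tE ≤ ker p`, so `tE` embeds in `B`, so `tE = ⊥`
    have htEker : tE ≤ LinearMap.ker p := by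
      intro x hx
      have : q ⟨x, hx⟩ ∈ (⊥ : Submodule R ↑S) := hrq0 ▸ LinearMap.mem_range_self q ⟨x, hx⟩
      exact this
    have htEfr : IsFrX 𝒯 ↥tE := inj_into_B tE htEker
    have : Subsingleton ↥tE := subsingleton_of_tor_fr htp htor htEfr
    have htE0 : tE = ⊥ := Submodule.eq_bot_of_subsingleton
    -- hence `E` is torsionfree
    have hEfr : IsFrX 𝒯 ↑E := by
      intro T hT g
      have hgt : IsTorX ℱ ↥(LinearMap.range g) :=
        isTorX_of_surj (fun F hF f => htp.1 T hT F hF f) g.rangeRestrict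
          g.surjective_rangeRestrict
      have : LinearMap.range g ≤ (⊥ : Submodule R ↑E) := htE0 ▸ hle _ hgt
      rw [← LinearMap.range_eq_bot]
      exact le_bot_iff.mp this
    have hEF : E ∈ ℱ := htp.2.2 E hEfr
    -- then `E / im i ≅ S` is torsionfree, contradiction with `S` torsion nonzero
    have hquotF : ModuleCat.of R (↑E ⧸ LinearMap.range i) ∈ ℱ := hBext E hEF i hi
    have hquotfr : IsFrX 𝒯 (↑E ⧸ LinearMap.range i) := fun T hT f =>
      htp.1 T hT (ModuleCat.of R (↑E ⧸ LinearMap.range i)) hquotF f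
    have hStor : IsTorX ℱ ↑S := fun F hF f => htp.1 S hSmem F hF f
    have hquottor : IsTorX ℱ (↑E ⧸ LinearMap.range i) := by
      rw [hrange]
      exact isTorX_of_surj hStor
        ((p.quotKerEquivOfSurjective hp).symm : ↑S →ₗ[R] (↑E ⧸ LinearMap.ker p))
        (p.quotKerEquivOfSurjective hp).symm.surjective
    have : Subsingleton (↑E ⧸ LinearMap.range i) := subsingleton_of_tor_fr htp hquottor hquotfr
    have htop : LinearMap.range i = ⊤ := Submodule.Quotient.subsingleton_iff.mp this
    have hker : LinearMap.ker p = ⊤ := hrange ▸ htop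
    have hp0 : p = 0 := LinearMap.ker_eq_top.mp hker
    have : Subsingleton ↑S := by
      refine ⟨fun a b => ?_⟩
      obtain ⟨x, rfl⟩ := hp a
      obtain ⟨y, rfl⟩ := hp b
      rw [hp0]
      rfl
    exact (not_subsingleton_iff_nontrivial.mpr hSnt) this
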